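/- Let m ≥ 2 and let C be a normalized symmetric conference matrix of order 4m+2. Let c_A and c_B be complex numbers of absolute value 1 with Re(c_A) = (−1 + √(4m+1))/(4m) and Re(c_B) = (−1 − √(4m+1))/(4m), and let W_A (resp. W_B) be the (4m+1)×(4m+1) matrix obtained by discarding the first row and column of C, replacing the diagonal 0s with 1, the off-diagonal 1s with c_A (resp. c_B), and the off-diagonal −1s with conj(c_A) (resp. conj(c_B)). Then the complex Hadamard matrices W_A and W_B are not equivalent. -/

import Mathlib

open Matrix

/-- Equivalence of complex Hadamard matrices: `H = P₁ D₁ K D₂ P₂` with permutation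
matrices `P₁, P₂` and unitary diagonal matrices `D₁, D₂`. -/
def HadEquiv {n : Type*} [Fintype n] [DecidableEq n] (H K : Matrix n n ℂ) : Prop :=
  ∃ (σ τ : Equiv.Perm n) (d₁ d₂ : n → ℂ),
    (∀ i, ‖d₁ i‖ = 1) ∧ (∀ i, ‖d₂ i‖ = 1) ∧
    H = σ.permMatrix ℂ * Matrix.diagonal d₁ * K * Matrix.diagonal d₂ * τ.permMatrix ℂ

/-- `C` is a conference matrix of order `n`: zero diagonal, `±1` off the
diagonal, and `C Cᵀ = (n-1) I`. -/
def IsConference {n : ℕ} (C : Matrix (Fin n) (Fin n) ℝ) : Prop :=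
  (∀ i, C i i = 0) ∧ (∀ i j, i ≠ j → C i j = 1 ∨ C i j = -1) ∧
    C * C.transpose = ((n : ℝ) - 1) • 1

/-- A conference matrix is normalized if all off-diagonal entries of its first
row and first column equal `1`. -/
def IsNormalizedConf {n : ℕ} [NeZero n] (C : Matrix (Fin n) (Fin n) ℝ) : Prop :=
  ∀ j, j ≠ 0 → C 0 j = 1 ∧ C j 0 = 1

private theorem entry_formula' {n : Type*} [Fintype n] [DecidableEq n] (σ τ : Equiv.Perm n)
    (d₁ d₂ : n → ℂ) (K : Matrix n n ℂ) (i j : n) :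
    (σ.permMatrix ℂ * Matrix.diagonal d₁ * K * Matrix.diagonal d₂ * τ.permMatrix ℂ) i j
      = d₁ (σ i) * K (σ i) (τ.symm j) * d₂ (τ.symm j) := by
  have h1 : σ.permMatrix ℂ * Matrix.diagonal d₁ * K * Matrix.diagonal d₂ * τ.permMatrix ℂ
      = ((Matrix.diagonal d₁ * K * Matrix.diagonal d₂).submatrix σ id).submatrix id τ.symm := by
    rw [← PEquiv.mul_toMatrix_toPEquiv]
    congr 1
    rw [mul_assoc σ.toPEquiv.toMatrix, mul_assoc σ.toPEquiv.toMatrix, PEquiv.toMatrix_toPEquiv_mul]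
  rw [h1]
  simp [Matrix.diagonal_mul, Matrix.mul_diagonal]

private theorem conj_zpow' (c : ℂ) (h : ‖c‖ = 1) (e : ℤ) :
    (starRingEnd ℂ) (c ^ e) = c ^ (-e) := by
  have h1 : (starRingEnd ℂ) c = c⁻¹ := by
    apply eq_inv_of_mul_eq_one_left
    rw [mul_comm, Complex.mul_conj]; norm_cast; rw [Complex.normSq_eq_norm_sq, h]; norm_num
  rw [map_zpow₀, h1, _root_.inv_zpow, ← _root_.zpow_neg]

set_option maxHeartbeats 1000000 in
theorem stmt8 (m : ℕ) (hm : 2 ≤ m)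
    (C : Matrix (Fin (4 * m + 2)) (Fin (4 * m + 2)) ℝ)
    (hconf : IsConference C) (hnorm : IsNormalizedConf C) (hsym : C.transpose = C)
    (cA cB : ℂ) (hcAabs : ‖cA‖ = 1) (hcBabs : ‖cB‖ = 1)
    (hcAre : cA.re = (-1 + Real.sqrt (4 * m + 1)) / (4 * m))
    (hcBre : cB.re = (-1 - Real.sqrt (4 * m + 1)) / (4 * m)) :
    ¬ HadEquiv
      (Matrix.of fun i j : Fin (4 * m + 1) =>
        if i = j then (1 : ℂ)
        else if C i.succ j.succ = 1 then cA else (starRingEnd ℂ) cA)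
      (Matrix.of fun i j : Fin (4 * m + 1) =>
        if i = j then (1 : ℂ)
        else if C i.succ j.succ = 1 then cB else (starRingEnd ℂ) cB) := by
  rintro ⟨σ, τ, d₁, d₂, hd₁, hd₂, hEq⟩
  set K : Matrix (Fin (4 * m + 1)) (Fin (4 * m + 1)) ℂ :=
    Matrix.of fun i j : Fin (4 * m + 1) =>
      if i = j then (1 : ℂ)
      else if C i.succ j.succ = 1 then cB else (starRingEnd ℂ) cB with hK
  have hcB0 : cB ≠ 0 := by
    intro h; rw [h] at hcBabs; simp at hcBabs
  -- step 1: find j0 ≠ 0 with C 1 (j0.succ) = 1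
  obtain ⟨j0, hj0, hCj0⟩ :
      ∃ j0 : Fin (4 * m + 1), j0 ≠ 0 ∧ C (Fin.succ 0) j0.succ = 1 := by
    by_contra hno
    push_neg at hno
    have h01 : (0 : Fin (4 * m + 2)) ≠ 1 := by simp [Fin.ext_iff]
    have hsum : ∑ j, C 0 j * C 1 j = 0 := by
      have := congrFun (congrFun hconf.2.2 0) 1
      rw [Matrix.mul_apply] at this
      simp only [Matrix.transpose_apply] at this
      rw [this]
      simp [Matrix.one_apply, h01]
    have hterm : ∀ j : Fin (4 * m + 2),
        C 0 j * C 1 j = (if j = 0 then (1:ℝ) else 0) + (if j = 1 then 1 else 0) - 1 := by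
      intro j
      by_cases hj : j = 0
      · subst hj; simp [hconf.1 0, h01.symm]
      by_cases hj1 : j = 1
      · subst hj1; simp [hconf.1 1, h01]
      · have hC0j : C 0 j = 1 := (hnorm j hj).1
        have hjp : (j.pred hj) ≠ 0 := by
          intro h
          apply hj1
          have := congrArg Fin.succ h
          rwa [Fin.succ_pred, Fin.succ_zero_eq_one] at this
        have hne1 : C (Fin.succ 0) ((j.pred hj).succ) ≠ 1 := hno _ hjp
        rw [Fin.succ_pred, Fin.succ_zero_eq_one] at hne1
        have : C 1 j = -1 := by
          rcases hconf.2.1 1 j (fun h => hj1 h.symm) with h | h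
          · exact absurd h hne1
          · exact h
        rw [hC0j, this]
        simp [hj, hj1]
    rw [Finset.sum_congr rfl (fun j _ => hterm j)] at hsum
    simp [Finset.sum_add_distrib, Finset.sum_sub_distrib, Finset.sum_ite_eq',
      Finset.card_univ] at hsum
    have : (m : ℝ) ≥ 2 := by exact_mod_cast hm
    linarith
  have hCj1 : C 1 j0.succ = 1 := by
    rw [show (1 : Fin (4*m+2)) = Fin.succ 0 from Fin.succ_zero_eq_one.symm]
    exact hCj0
  have hCj1' : C j0.succ 1 = 1 := by
    rw [← hsym]; simpa using hCj1
  -- the four entry equations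
  have e1 : cA = d₁ (σ 0) * K (σ 0) (τ.symm j0) * d₂ (τ.symm j0) := by
    have := congrFun (congrFun hEq 0) j0
    rw [entry_formula'] at this
    simpa [Matrix.of_apply, Ne.symm hj0, hCj1] using this
  have e2 : cA = d₁ (σ j0) * K (σ j0) (τ.symm 0) * d₂ (τ.symm 0) := by
    have := congrFun (congrFun hEq j0) 0
    rw [entry_formula'] at this
    simpa [Matrix.of_apply, hj0, hCj1'] using this
  have e3 : (1 : ℂ) = d₁ (σ 0) * K (σ 0) (τ.symm 0) * d₂ (τ.symm 0) := by
    have := congrFun (congrFun hEq 0) 0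
    rw [entry_formula'] at this
    simpa [Matrix.of_apply] using this
  have e4 : (1 : ℂ) = d₁ (σ j0) * K (σ j0) (τ.symm j0) * d₂ (τ.symm j0) := by
    have := congrFun (congrFun hEq j0) j0
    rw [entry_formula'] at this
    simpa [Matrix.of_apply] using this
  have hmc : ∀ (u : ℂ), ‖u‖ = 1 → u * (starRingEnd ℂ) u = 1 := by
    intro u hu
    rw [Complex.mul_conj]; norm_cast; rw [Complex.normSq_eq_norm_sq, hu]; norm_num
  have c1 := hmc _ (hd₁ (σ 0))
  have c2 := hmc _ (hd₁ (σ j0))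
  have c3 := hmc _ (hd₂ (τ.symm j0))
  have c4 := hmc _ (hd₂ (τ.symm 0))
  have key : cA ^ 2 = K (σ 0) (τ.symm j0) * K (σ j0) (τ.symm 0) *
      (starRingEnd ℂ) (K (σ 0) (τ.symm 0)) * (starRingEnd ℂ) (K (σ j0) (τ.symm j0)) := by
    have h := congrArg₂ (fun x y : ℂ => x * y)
      (congrArg₂ (fun x y : ℂ => x * y) e1 e2)
      (congrArg₂ (fun x y : ℂ => x * y)
        (congrArg (starRingEnd ℂ) e3) (congrArg (starRingEnd ℂ) e4))
    simp only [_root_.map_mul, _root_.map_one, mul_one] at h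
    linear_combination h +
      (K (σ 0) (τ.symm j0) * K (σ j0) (τ.symm 0) *
        (starRingEnd ℂ) (K (σ 0) (τ.symm 0)) * (starRingEnd ℂ) (K (σ j0) (τ.symm j0))) *
      ((d₁ (σ j0) * (starRingEnd ℂ) (d₁ (σ j0))) * (d₂ (τ.symm j0) * (starRingEnd ℂ) (d₂ (τ.symm j0))) *
        (d₂ (τ.symm 0) * (starRingEnd ℂ) (d₂ (τ.symm 0)))) * c1 +
      (K (σ 0) (τ.symm j0) * K (σ j0) (τ.symm 0) *
        (starRingEnd ℂ) (K (σ 0) (τ.symm 0)) * (starRingEnd ℂ) (K (σ j0) (τ.symm j0))) *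
      ((d₂ (τ.symm j0) * (starRingEnd ℂ) (d₂ (τ.symm j0))) *
        (d₂ (τ.symm 0) * (starRingEnd ℂ) (d₂ (τ.symm 0)))) * c2 +
      (K (σ 0) (τ.symm j0) * K (σ j0) (τ.symm 0) *
        (starRingEnd ℂ) (K (σ 0) (τ.symm 0)) * (starRingEnd ℂ) (K (σ j0) (τ.symm j0))) *
      ((d₂ (τ.symm 0) * (starRingEnd ℂ) (d₂ (τ.symm 0)))) * c3 +
      (K (σ 0) (τ.symm j0) * K (σ j0) (τ.symm 0) *
        (starRingEnd ℂ) (K (σ 0) (τ.symm 0)) * (starRingEnd ℂ) (K (σ j0) (τ.symm j0))) * c4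
  -- every entry of K is a power of cB
  have hKpow : ∀ a b : Fin (4 * m + 1), ∃ e : ℤ, e.natAbs ≤ 1 ∧ K a b = cB ^ e := by
    intro a b
    by_cases hab : a = b
    · exact ⟨0, by norm_num, by simp [hK, hab]⟩
    by_cases hc : C a.succ b.succ = 1
    · exact ⟨1, by norm_num, by simp [hK, hab, hc]⟩
    · refine ⟨-1, by norm_num, ?_⟩
      have hKv : K a b = (starRingEnd ℂ) cB := by simp [hK, hab, hc]
      rw [hKv, ← conj_zpow' cB hcBabs 1, zpow_one]
  obtain ⟨eAB, hAB1, hAB⟩ := hKpow (σ 0) (τ.symm j0)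
  obtain ⟨eCD, hCD1, hCD⟩ := hKpow (σ j0) (τ.symm 0)
  obtain ⟨eAD, hAD1, hAD⟩ := hKpow (σ 0) (τ.symm 0)
  obtain ⟨eCB, hCB1, hCB⟩ := hKpow (σ j0) (τ.symm j0)
  have key2 : cA ^ 2 = cB ^ (eAB + eCD + (-eAD) + (-eCB)) := by
    rw [key, hAB, hCD, hAD, hCB, conj_zpow' cB hcBabs, conj_zpow' cB hcBabs,
      ← zpow_add₀ hcB0, ← zpow_add₀ hcB0, ← zpow_add₀ hcB0]
  obtain ⟨k, hkle, hre⟩ : ∃ k : ℕ, k ≤ 4 ∧ (cA ^ 2).re = (cB ^ k).re := by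
    refine ⟨(eAB + eCD + (-eAD) + (-eCB)).natAbs, by omega, ?_⟩
    set t : ℤ := eAB + eCD + (-eAD) + (-eCB) with ht
    rcases le_or_gt 0 t with hts | hts
    · rw [key2, ← Int.natAbs_of_nonneg hts, zpow_natCast]
      simp [Int.natAbs_natCast]
      rw [Int.natAbs_abs]
    · have htn : t = -(t.natAbs : ℤ) := by omega
      rw [key2, htn, _root_.zpow_neg, zpow_natCast, Complex.inv_re]
      have habsk : Complex.normSq (cB ^ t.natAbs) = 1 := by
        rw [Complex.normSq_eq_norm_sq, norm_pow, hcBabs, one_pow]; norm_num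
      rw [habsk]; simp [Int.natAbs_natCast]
      rw [Int.natAbs_abs]
  -- real estimates
  set s : ℝ := Real.sqrt (4 * m + 1) with hs
  have hs2 : s ^ 2 = 4 * m + 1 := Real.sq_sqrt (by positivity)
  have hs0 : 0 ≤ s := Real.sqrt_nonneg _
  have hm9 : (9 : ℝ) ≤ 4 * m + 1 := by
    have : (2 : ℝ) ≤ m := by exact_mod_cast hm
    linarith
  have hs3 : 3 ≤ s := by nlinarith
  have h4m : (0 : ℝ) < 4 * m := by nlinarith
  have h4m' : (4 * m : ℝ) = s ^ 2 - 1 := by linarith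
  have haval : cA.re * (4 * m) = -1 + s := by
    rw [hcAre]; field_simp
  have hbval : cB.re * (4 * m) = -1 - s := by
    rw [hcBre]; field_simp
  have ha1 : 0 < cA.re := by
    have h0 : (0 : ℝ) * (4 * m) < cA.re * (4 * m) := by
      rw [zero_mul, haval]; linarith
    exact lt_of_mul_lt_mul_right h0 h4m.le
  have ha2 : cA.re ≤ 1 / 4 := by
    have h0 : cA.re * (4 * m) ≤ (1 / 4) * (4 * m) := by
      rw [haval]
      nlinarith [mul_nonneg (by linarith : (0:ℝ) ≤ s - 3) (by linarith : (0:ℝ) ≤ s - 1)]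
    exact le_of_mul_le_mul_right h0 h4m
  have hb1 : -(1 / 2) ≤ cB.re := by
    have h0 : (-(1 / 2)) * (4 * m) ≤ cB.re * (4 * m) := by
      rw [hbval]
      nlinarith [mul_nonneg (by linarith : (0:ℝ) ≤ s - 3) (by linarith : (0:ℝ) ≤ s + 1)]
    exact le_of_mul_le_mul_right h0 h4m
  have hb2 : cB.re < 0 := by
    have h0 : cB.re * (4 * m) < (0 : ℝ) * (4 * m) := by
      rw [zero_mul, hbval]; linarith
    exact lt_of_mul_lt_mul_right h0 h4m.le
  have hab : cA.re < -cB.re := by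
    have h0 : cA.re * (4 * m) < (-cB.re) * (4 * m) := by
      rw [haval, neg_mul, hbval]; linarith
    exact lt_of_mul_lt_mul_right h0 h4m.le
  have hA2 : cA.re ^ 2 + cA.im ^ 2 = 1 := by
    have h := Complex.sq_norm cA
    rw [hcAabs, Complex.normSq_apply] at h
    linear_combination -h
  have hB2 : cB.re ^ 2 + cB.im ^ 2 = 1 := by
    have h := Complex.sq_norm cB
    rw [hcBabs, Complex.normSq_apply] at h
    linear_combination -h
  have hx2 : cA.re ^ 2 ≤ 1 / 16 := by nlinarith [ha1, ha2]
  have hu2 : cB.re ^ 2 ≤ 1 / 4 := by nlinarith [hb1, hb2]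
  -- closed forms for real parts of powers
  have hre2 : (cA ^ 2).re = 2 * cA.re ^ 2 - 1 := by
    rw [sq, Complex.mul_re]; linear_combination -hA2
  have p0 : ((cB ^ 0 : ℂ)).re = 1 := by norm_num
  have p1 : ((cB ^ 1 : ℂ)).re = cB.re := by norm_num
  have p2 : ((cB ^ 2 : ℂ)).re = 2 * cB.re ^ 2 - 1 := by
    rw [sq, Complex.mul_re]; linear_combination -hB2
  have q2 : ((cB ^ 2 : ℂ)).im = 2 * cB.re * cB.im := by
    rw [sq, Complex.mul_im]; ring
  have p3 : ((cB ^ 3 : ℂ)).re = 4 * cB.re ^ 3 - 3 * cB.re := by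
    rw [pow_succ, Complex.mul_re, p2, q2]
    linear_combination (-2 * cB.re) * hB2
  have q3 : ((cB ^ 3 : ℂ)).im = 4 * cB.re ^ 2 * cB.im - cB.im := by
    rw [pow_succ, Complex.mul_im, p2, q2]; ring
  have p4 : ((cB ^ 4 : ℂ)).re = 8 * cB.re ^ 4 - 8 * cB.re ^ 2 + 1 := by
    rw [pow_succ, Complex.mul_re, p3, q3]
    linear_combination (1 - 4 * cB.re ^ 2) * hB2
  rw [hre2] at hre
  interval_cases k
  · rw [p0] at hre; linarith
  · rw [p1] at hre; linarith
  · rw [p2] at hre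
    have hxu : cA.re ^ 2 < cB.re ^ 2 := by nlinarith [ha1, hab]
    linarith
  · rw [p3] at hre
    have hpos : 0 < 4 * cB.re ^ 3 - 3 * cB.re := by nlinarith [hb2, hu2]
    linarith
  · rw [p4] at hre
    have h4 : -(1 / 2) ≤ 8 * cB.re ^ 4 - 8 * cB.re ^ 2 + 1 := by
      nlinarith [mul_nonneg (by linarith : (0:ℝ) ≤ 1/4 - cB.re ^ 2)
        (by linarith : (0:ℝ) ≤ 3/4 - cB.re ^ 2)]
    linarith
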